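/- Let m ≥ 1, N ≥ 1, M ≥ 0 be integers, D = 2^m, and ω = e^{2πi/D}. For each k = 1, …, m, let q^{(k)} : {0,…,N−1} → [0,∞) and p^{(k)} : {0,…,N−1} → {0,…,D−1}, and define f_k(θ, ζ) = Σ_{n=0}^{N−1} q^{(k)}_n ζ^{p^{(k)}_n} e^{inθ} for θ ∈ ℝ, ζ ∈ ℂ. Assume that for each k the function θ ↦ f_k(θ, −1) has a spectral null of order M at θ = 0. Then for each integer r with 1 ≤ r ≤ D−1, the function θ ↦ Π_{k=1}^{m} f_k(N^{k−1}·θ, ω^{2^{k−1}·r}) has a spectral null of order M at θ = 0. -/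

import Mathlib

open Complex Finset Real

private lemma iteratedDeriv_add_apply0 {j : ℕ} {a b : ℝ → ℂ}
    (ha : ContDiff ℝ ((⊤ : ℕ∞) : WithTop ℕ∞) a) (hb : ContDiff ℝ ((⊤ : ℕ∞) : WithTop ℕ∞) b) :
    iteratedDeriv j (fun x => a x + b x) 0 =
      iteratedDeriv j a 0 + iteratedDeriv j b 0 := by
  simp only [← iteratedDerivWithin_univ]
  exact iteratedDerivWithin_add (Set.mem_univ 0) uniqueDiffOn_univ
    (ha.contDiffWithinAt.of_le (by exact_mod_cast le_top)) (hb.contDiffWithinAt.of_le (by exact_mod_cast le_top))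

/-- If `h` has all derivatives up to order `j` vanishing at `0` and `g` is smooth,
then the `j`-th derivative of `h * g` vanishes at `0`. -/
private lemma null_mul : ∀ (j : ℕ) (g h : ℝ → ℂ), ContDiff ℝ ((⊤ : ℕ∞) : WithTop ℕ∞) g → ContDiff ℝ ((⊤ : ℕ∞) : WithTop ℕ∞) h →
    (∀ i ≤ j, iteratedDeriv i h 0 = 0) → iteratedDeriv j (fun x => h x * g x) 0 = 0 := by
  intro j
  induction j with
  | zero =>
    intro g h _ _ hnull
    simp only [iteratedDeriv_zero]
    show h 0 * g 0 = 0
    have h0 := hnull 0 le_rfl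
    rw [iteratedDeriv_zero] at h0
    rw [h0, zero_mul]
  | succ j IH =>
    intro g h hg hh hnull
    rw [iteratedDeriv_succ']
    have hderiv : deriv (fun x => h x * g x) =
        fun x => deriv h x * g x + h x * deriv g x := by
      funext x
      exact deriv_fun_mul ((hh.differentiable (by simp)) x) ((hg.differentiable (by simp)) x)
    rw [hderiv]
    have hh' : ContDiff ℝ ((⊤ : ℕ∞) : WithTop ℕ∞) (deriv h) := (contDiff_infty_iff_deriv.mp hh).2
    have hg' : ContDiff ℝ ((⊤ : ℕ∞) : WithTop ℕ∞) (deriv g) := (contDiff_infty_iff_deriv.mp hg).2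
    rw [iteratedDeriv_add_apply0 (hh'.mul hg) (hh.mul hg')]
    have t1 : iteratedDeriv j (fun x => deriv h x * g x) 0 = 0 := by
      refine IH g (deriv h) hg hh' ?_
      intro i hi
      rw [← iteratedDeriv_succ']
      exact hnull (i + 1) (by omega)
    have t2 : iteratedDeriv j (fun x => h x * deriv g x) 0 = 0 :=
      IH (deriv g) h hg' hh (fun i hi => hnull i (by omega))
    rw [t1, t2, add_zero]

private lemma null_prod (m M : ℕ) (G : Fin m → ℝ → ℂ) (hG : ∀ k, ContDiff ℝ ((⊤ : ℕ∞) : WithTop ℕ∞) (G k))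
    (k0 : Fin m) (h0 : ∀ i ≤ M, iteratedDeriv i (G k0) 0 = 0) :
    ∀ j ≤ M, iteratedDeriv j (fun θ => ∏ k : Fin m, G k θ) 0 = 0 := by
  intro j hj
  have hsplit : (fun θ => ∏ k : Fin m, G k θ) =
      fun θ => G k0 θ * ∏ k ∈ Finset.univ.erase k0, G k θ :=
    funext fun θ => (Finset.mul_prod_erase Finset.univ (fun k => G k θ)
      (Finset.mem_univ k0)).symm
  rw [hsplit]
  exact null_mul j _ _ (contDiff_prod fun i _ => hG i) (hG k0)
    (fun i hi => h0 i (hi.trans hj))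

/-- **Theorem 4.** Given `D = 2^m` and functions
`f_k(θ, ζ) = ∑_{n<N} q^{(k)}_n ζ^{p^{(k)}_n} e^{inθ}` such that each
`θ ↦ f_k(θ, −1)` has an `M`-th order spectral null at `θ = 0`, each of the
functions `θ ↦ ∏_{k=1}^m f_k(N^{k−1} θ, ω^{2^{k−1} r})`, `1 ≤ r ≤ D − 1`, has an
`M`-th order spectral null at `θ = 0`. -/
theorem product_spectral_null (m N M : ℕ) (hm : 1 ≤ m) (hN : 1 ≤ N)
    (D : ℕ) (hD : D = 2 ^ m)
    (ω : ℂ) (hω : ω = Complex.exp (2 * Real.pi * Complex.I / (D : ℂ)))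
    (q : Fin m → ℕ → ℝ) (hq : ∀ k n, 0 ≤ q k n)
    (p : Fin m → ℕ → Fin D)
    (f : Fin m → ℝ → ℂ → ℂ)
    (hf : ∀ (k : Fin m) (θ : ℝ) (ζ : ℂ), f k θ ζ =
      ∑ n ∈ Finset.range N, (q k n : ℂ) * ζ ^ ((p k n : ℕ)) *
        Complex.exp (Complex.I * (n : ℂ) * (θ : ℂ)))
    (hnull : ∀ k : Fin m, ∀ j : ℕ, j ≤ M →
      iteratedDeriv j (fun θ : ℝ => f k θ (-1)) 0 = 0) :
    ∀ r : ℕ, 1 ≤ r → r ≤ D - 1 →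
      ∀ j : ℕ, j ≤ M →
        iteratedDeriv j
          (fun θ : ℝ => ∏ k : Fin m, f k ((N : ℝ) ^ (k : ℕ) * θ) (ω ^ (2 ^ (k : ℕ) * r))) 0 = 0 := by
  -- smoothness of the slices
  have key : ∀ (k : Fin m) (ζ : ℂ), ContDiff ℝ ((⊤ : ℕ∞) : WithTop ℕ∞) (fun θ : ℝ => f k θ ζ) := by
    intro k ζ
    simp only [hf]
    exact ContDiff.sum fun n _ =>
      contDiff_const.mul ((contDiff_const.mul Complex.ofRealCLM.contDiff).cexp)
  intro r hr1 hr2 j hj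
  -- 2-adic valuation of r
  set v : ℕ := r.factorization 2 with hv
  set u : ℕ := r / 2 ^ v with hu
  have hr0 : r ≠ 0 := by omega
  have hru : 2 ^ v * u = r := Nat.ordProj_mul_ordCompl_eq_self r 2
  have hundvd : ¬ 2 ∣ u := Nat.not_dvd_ordCompl Nat.prime_two hr0
  have huodd : Odd u := by
    rw [Nat.dvd_iff_mod_eq_zero] at hundvd
    exact Nat.odd_iff.mpr (by omega)
  have hvm : v < m := by
    have hdvd : 2 ^ v ∣ r := Nat.ordProj_dvd r 2
    have h1 : 2 ^ v ≤ r := Nat.le_of_dvd (by omega) hdvd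
    have h2 : (2 : ℕ) ^ v < 2 ^ m := by
      have : (1 : ℕ) ≤ 2 ^ m := Nat.one_le_two_pow
      omega
    exact (Nat.pow_lt_pow_iff_right (by norm_num)).mp h2
  set k0n : ℕ := m - 1 - v with hk0n
  have hk0m : k0n < m := by omega
  set k0 : Fin m := ⟨k0n, hk0m⟩ with hk0
  -- the key root of unity computation
  have hexp : 2 ^ k0n * r = 2 ^ (m - 1) * u := by
    rw [← hru, ← mul_assoc, ← pow_add]
    congr 2
    omega
  have hζ : ω ^ (2 ^ k0n * r) = -1 := by
    rw [hexp, pow_mul]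
    have hω2 : ω ^ (2 ^ (m - 1)) = -1 := by
      rw [hω, ← Complex.exp_nat_mul]
      have harg : ((2 ^ (m - 1) : ℕ) : ℂ) * (2 * (Real.pi : ℂ) * Complex.I / (D : ℂ)) =
          (Real.pi : ℂ) * Complex.I := by
        rw [hD]
        push_cast
        have h2 : (2 : ℂ) ^ m = 2 ^ (m - 1) * 2 := by
          rw [← pow_succ]
          congr 1
          omega
        rw [h2]
        have hne : (2 : ℂ) ^ (m - 1) ≠ 0 := pow_ne_zero _ two_ne_zero
        field_simp
      rw [harg, Complex.exp_pi_mul_I]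
    rw [hω2]
    exact huodd.neg_one_pow
  -- smoothness of the factors
  have hGsm : ∀ k : Fin m,
      ContDiff ℝ ((⊤ : ℕ∞) : WithTop ℕ∞) (fun θ : ℝ => f k ((N : ℝ) ^ (k : ℕ) * θ) (ω ^ (2 ^ (k : ℕ) * r))) :=
    fun k => (key k _).comp (contDiff_const.mul contDiff_id)
  -- the k0 factor is null
  have h0 : ∀ i ≤ M,
      iteratedDeriv i (fun θ : ℝ => f k0 ((N : ℝ) ^ (k0 : ℕ) * θ) (ω ^ (2 ^ (k0 : ℕ) * r))) 0
        = 0 := by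
    intro i hi
    have hcongr : (fun θ : ℝ => f k0 ((N : ℝ) ^ (k0 : ℕ) * θ) (ω ^ (2 ^ (k0 : ℕ) * r))) =
        fun θ : ℝ => (fun t : ℝ => f k0 t (-1)) ((N : ℝ) ^ k0n * θ) := by
      have : ω ^ (2 ^ (k0 : ℕ) * r) = -1 := hζ
      rw [this]
    rw [hcongr, iteratedDeriv_comp_const_smul (n := i) ((key k0 (-1)).of_le (by exact_mod_cast le_top)) ((N : ℝ) ^ k0n)]
    simp only [mul_zero]
    rw [hnull k0 i hi, smul_zero]
  exact null_prod m M _ hGsm k0 h0 j hj
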